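/- Let G be a finite multidigraph that is k-out-regular for an integer k > 1, with an edge e* = (w*, v*). Then the homomorphism σ̄ : cok ψ → K(𝓛G, e*) induced by σ is injective. -/

import Mathlib

open Finsupp

/-- The Laplacian of a multidigraph with edge tail map `t` and head map `h`,
as a linear endomorphism of the free abelian group on the vertices. -/
noncomputable def lap {V E : Type*} [Fintype E] [DecidableEq V] (t h : E → V) :
    (V →₀ ℤ) →ₗ[ℤ] (V →₀ ℤ) :=
  Finsupp.lift (V →₀ ℤ) ℤ V fun v =>
    ∑ e : E, if t e = v then Finsupp.single (h e) (1 : ℤ) - Finsupp.single v 1 else 0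

/-- The modified Laplacian `φ_{G,w}` : sends `v ↦ Δ_G v` for `v ≠ w`, and `w ↦ w`. -/
noncomputable def phiMod {V E : Type*} [Fintype E] [DecidableEq V] (t h : E → V) (w : V) :
    (V →₀ ℤ) →ₗ[ℤ] (V →₀ ℤ) :=
  Finsupp.lift (V →₀ ℤ) ℤ V fun v =>
    if v = w then Finsupp.single w 1 else lap t h (Finsupp.single v 1)

/-- Edges of the directed line graph: pairs `(e, f)` with `e⁺ = f⁻`. -/
def LineEdge {V E : Type*} (t h : E → V) : Type _ := {p : E × E // h p.1 = t p.2}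

instance {V E : Type*} [Fintype E] [DecidableEq V] (t h : E → V) :
    Fintype (LineEdge t h) := by
  unfold LineEdge; infer_instance

/-- in-degree of a vertex -/
def indeg {V E : Type*} [Fintype E] [DecidableEq V] (h : E → V) (v : V) : ℕ :=
  (Finset.univ.filter fun e => h e = v).card

/-- out-degree of a vertex -/
def outdeg {V E : Type*} [Fintype E] [DecidableEq V] (t : E → V) (v : V) : ℕ :=
  (Finset.univ.filter fun e => t e = v).card

/-- The modified target map `τ`: `e ↦ e⁺` for `e ≠ e*`, `e* ↦ 0`. -/
noncomputable def tau {V E : Type*} [DecidableEq E] (h : E → V) (estar : E) :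
    (E →₀ ℤ) →ₗ[ℤ] (V →₀ ℤ) :=
  Finsupp.lift (V →₀ ℤ) ℤ E fun e =>
    if e = estar then 0 else Finsupp.single (h e) 1

/-- The map `ρ`: `e ↦ Δ_G(w*) − v* − w* + e⁺` for `e ≠ e*`, `e* ↦ 0`,
where `w* = t e*` and `v* = h e*`. -/
noncomputable def rho {V E : Type*} [Fintype E] [DecidableEq V] [DecidableEq E]
    (t h : E → V) (estar : E) : (E →₀ ℤ) →ₗ[ℤ] (V →₀ ℤ) :=
  Finsupp.lift (V →₀ ℤ) ℤ E fun e =>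
    if e = estar then 0 else
      lap t h (Finsupp.single (t estar) 1) - Finsupp.single (h estar) 1
        - Finsupp.single (t estar) 1 + Finsupp.single (h e) 1

/-- The map `ρ₀`: `v ↦ Δ_G(w*) − v* − w* + v`. -/
noncomputable def rho0 {V E : Type*} [Fintype E] [DecidableEq V] (t h : E → V) (estar : E) :
    (V →₀ ℤ) →ₗ[ℤ] (V →₀ ℤ) :=
  Finsupp.lift (V →₀ ℤ) ℤ V fun v =>
    lap t h (Finsupp.single (t estar) 1) - Finsupp.single (h estar) 1
      - Finsupp.single (t estar) 1 + Finsupp.single v 1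

/-- The map `ψ`: `v ↦ Δ_G v` for `v ≠ w*`, and `w* ↦ Δ_G(w*) − v*`. -/
noncomputable def psi {V E : Type*} [Fintype E] [DecidableEq V] (t h : E → V) (estar : E) :
    (V →₀ ℤ) →ₗ[ℤ] (V →₀ ℤ) :=
  Finsupp.lift (V →₀ ℤ) ℤ V fun v =>
    if v = t estar then
      lap t h (Finsupp.single (t estar) 1) - Finsupp.single (h estar) 1
    else lap t h (Finsupp.single v 1)

/-- The map `σ`: `v ↦ Σ_{e⁻ = v} e`. -/
noncomputable def sigmaMap {V E : Type*} [Fintype E] [DecidableEq V] (t : E → V) :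
    (V →₀ ℤ) →ₗ[ℤ] (E →₀ ℤ) :=
  Finsupp.lift (E →₀ ℤ) ℤ V fun v =>
    ∑ e : E, if t e = v then Finsupp.single e (1 : ℤ) else 0

section Dev
set_option linter.unusedSectionVars false
variable {V E : Type*} [Fintype E] [DecidableEq V] [DecidableEq E]

private lemma liftsingle {X M : Type*} [AddCommGroup M] (f : X → M) (x : X) :
    (Finsupp.lift M ℤ X f) (Finsupp.single x (1:ℤ)) = f x := by
  rw [Finsupp.lift_apply, Finsupp.sum_single_index] <;> simp

lemma sigma_single (t : E → V) (v : V) :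
    sigmaMap t (single v 1) = ∑ e : E, if t e = v then single e (1:ℤ) else 0 :=
  liftsingle _ _

lemma lap_single (t h : E → V) (v : V) :
    lap t h (single v 1) = ∑ e : E, if t e = v then single (h e) (1:ℤ) - single v 1 else 0 :=
  liftsingle _ _

lemma tau_single (h : E → V) (estar : E) (e : E) :
    tau h estar (single e 1) = if e = estar then 0 else single (h e) (1:ℤ) :=
  liftsingle _ _

lemma psi_single (t h : E → V) (estar : E) (v : V) :
    psi t h estar (single v 1) =
      if v = t estar then lap t h (single (t estar) 1) - single (h estar) 1
      else lap t h (single v 1) :=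
  liftsingle _ _

lemma phiMod_single (t h : E → V) (w : V) (v : V) :
    phiMod t h w (single v 1) =
      if v = w then single w 1 else lap t h (single v 1) :=
  liftsingle _ _

lemma lap_single_eq (t h : E → V) (v : V) :
    lap t h (single v 1) =
      (∑ e : E, if t e = v then single (h e) (1:ℤ) else 0) - (outdeg t v : ℤ) • single v 1 := by
  rw [lap_single]
  have : ∀ e : E, (if t e = v then single (h e) (1:ℤ) - single v 1 else 0)
      = (if t e = v then single (h e) (1:ℤ) else 0) - (if t e = v then single v (1:ℤ) else 0) := by
    intro e; split <;> simp
  rw [Finset.sum_congr rfl fun e _ => this e, Finset.sum_sub_distrib]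
  congr 1
  rw [← Finset.sum_filter, Finset.sum_const, outdeg]
  simp [← Nat.cast_smul_eq_nsmul ℤ]

end Dev

instance {V E : Type*} [DecidableEq E] (t h : E → V) : DecidableEq (LineEdge t h) := by
  unfold LineEdge; infer_instance

section Dev2
set_option linter.unusedSectionVars false
variable {V E : Type*} [Fintype E] [DecidableEq V] [DecidableEq E]

lemma lapL_single (t h : E → V) (e : E) :
    lap (fun p : LineEdge t h => p.1.1) (fun p : LineEdge t h => p.1.2) (single e 1)
      = ∑ f : E, if t f = h e then single f (1:ℤ) - single e 1 else 0 := by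
  rw [lap_single]
  have key : (∑ p : LineEdge t h, if p.1.1 = e then single p.1.2 (1:ℤ) - single e 1 else 0)
      = ∑ p : {q : E × E // h q.1 = t q.2},
          (fun q : E × E => if q.1 = e then single q.2 (1:ℤ) - single e 1 else 0) p.1 :=
    Fintype.sum_bijective (fun p => p) ⟨fun a b hh => hh, fun b => ⟨b, rfl⟩⟩ _ _ (fun x => rfl)
  have hsub := Finset.sum_subtype (p := fun q : E × E => h q.1 = t q.2)
    (F := inferInstance)
    (Finset.univ.filter fun q : E × E => h q.1 = t q.2) (by simp)
    (fun q : E × E => if q.1 = e then single q.2 (1:ℤ) - single e 1 else 0)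
  rw [key, ← hsub]
  rw [Finset.sum_filter, Fintype.sum_prod_type]
  rw [Finset.sum_eq_single e]
  · apply Finset.sum_congr rfl; intro b _
    by_cases hb : t b = h e
    · simp [hb]
    · have : ¬ (h e = t b) := fun hh => hb hh.symm
      simp [hb, this]
  · intro a _ ha
    apply Finset.sum_eq_zero; intro b _; simp [ha]
  · simp

lemma sum_ite_const (t : E → V) (v : V) (C : V →₀ ℤ) :
    (∑ e : E, if t e = v then C else 0) = (outdeg t v) • C := by
  rw [← Finset.sum_filter, Finset.sum_const, outdeg]

lemma sum_ite_constE (t : E → V) (v : V) (C : E →₀ ℤ) :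
    (∑ e : E, if t e = v then C else 0) = (outdeg t v) • C := by
  rw [← Finset.sum_filter, Finset.sum_const, outdeg]

lemma phiL_single_ne (t h : E → V) (estar : E) (k : ℕ)
    (hreg : ∀ v : V, outdeg t v = k) {e : E} (he : e ≠ estar) :
    phiMod (fun p : LineEdge t h => p.1.1) (fun p : LineEdge t h => p.1.2) estar (single e 1)
      = sigmaMap t (single (h e) 1) - (k:ℤ) • single e 1 := by
  rw [phiMod_single, if_neg he, lapL_single, sigma_single]
  have : ∀ f : E, (if t f = h e then single f (1:ℤ) - single e 1 else 0)
      = (if t f = h e then single f (1:ℤ) else 0) - (if t f = h e then single e (1:ℤ) else 0) := by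
    intro f; split <;> simp
  rw [Finset.sum_congr rfl fun f _ => this f, Finset.sum_sub_distrib, sum_ite_constE t (h e),
    hreg (h e)]
  simp [Nat.cast_smul_eq_nsmul]

lemma tau_sigma_single (t h : E → V) (estar : E) (v : V) :
    tau h estar (sigmaMap t (single v 1))
      = (∑ e : E, if t e = v then single (h e) (1:ℤ) else 0)
        - (if t estar = v then single (h estar) (1:ℤ) else 0) := by
  rw [sigma_single, map_sum]
  have step : ∀ e : E, tau h estar (if t e = v then single e (1:ℤ) else 0)
      = (if t e = v then single (h e) (1:ℤ) else 0)
        - (if e = estar then (if t e = v then single (h e) (1:ℤ) else 0) else 0) := by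
    intro e
    by_cases he : e = estar
    · subst he; by_cases hv : t e = v <;> simp [hv, tau_single]
    · by_cases hv : t e = v <;> simp [hv, tau_single, he]
  rw [Finset.sum_congr rfl fun e _ => step e, Finset.sum_sub_distrib]
  congr 1
  rw [Finset.sum_ite_eq' Finset.univ estar (fun e => if t e = v then single (h e) (1:ℤ) else 0)]
  simp

lemma tau_sigma (t h : E → V) (estar : E) (k : ℕ) (hreg : ∀ v : V, outdeg t v = k)
    (v : V) :
    tau h estar (sigmaMap t (single v 1))
      = psi t h estar (single v 1) + (k:ℤ) • single v 1 := by
  rw [tau_sigma_single, psi_single]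
  by_cases hv : v = t estar
  · rw [if_pos hv, lap_single_eq, hreg]
    subst hv
    rw [if_pos rfl]
    push_cast [Nat.cast_smul_eq_nsmul]
    abel
  · rw [if_neg hv, lap_single_eq, hreg, if_neg (fun hh => hv hh.symm)]
    push_cast [Nat.cast_smul_eq_nsmul]
    abel

end Dev2

section Dev3
set_option linter.unusedSectionVars false
variable {V E : Type*} [Fintype E] [DecidableEq V] [DecidableEq E]

lemma tau_sigma_lm (t h : E → V) (estar : E) (k : ℕ) (hreg : ∀ v : V, outdeg t v = k) :
    (tau h estar).comp (sigmaMap t) = psi t h estar + (k:ℤ) • LinearMap.id := by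
  apply Finsupp.lhom_ext'
  intro v
  apply LinearMap.ext_ring
  simp only [LinearMap.coe_comp, Function.comp_apply, Finsupp.lsingle_apply,
    LinearMap.add_apply, LinearMap.smul_apply, LinearMap.id_apply]
  exact tau_sigma t h estar k hreg v

lemma tau_phiL (t h : E → V) (estar : E) (k : ℕ) (hreg : ∀ v : V, outdeg t v = k) :
    (tau h estar).comp
        (phiMod (fun p : LineEdge t h => p.1.1) (fun p : LineEdge t h => p.1.2) estar)
      = (psi t h estar).comp (tau h estar) := by
  apply Finsupp.lhom_ext'
  intro e
  apply LinearMap.ext_ring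
  simp only [LinearMap.coe_comp, Function.comp_apply, Finsupp.lsingle_apply]
  by_cases he : e = estar
  · subst he
    rw [phiMod_single, if_pos rfl, tau_single, if_pos rfl]
    simp
  · rw [phiL_single_ne t h estar k hreg he, map_sub, map_smul, tau_single, if_neg he,
      tau_sigma t h estar k hreg (h e)]
    abel

lemma sigma_apply (t : E → V) (y : V →₀ ℤ) (f : E) : sigmaMap t y f = y (t f) := by
  have hmap : (Finsupp.lapply f).comp (sigmaMap t)
      = (Finsupp.lapply (t f) : (V →₀ ℤ) →ₗ[ℤ] ℤ) := by
    apply Finsupp.lhom_ext'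
    intro v
    apply LinearMap.ext_ring
    simp only [LinearMap.coe_comp, Function.comp_apply, Finsupp.lsingle_apply,
      Finsupp.lapply_apply]
    rw [sigma_single, Finsupp.finset_sum_apply]
    have step : ∀ e : E, ((if t e = v then single e (1:ℤ) else 0 : E →₀ ℤ)) f
        = if t e = v then (if e = f then (1:ℤ) else 0) else 0 := by
      intro e
      rw [apply_ite (fun g : E →₀ ℤ => g f)]
      simp [Finsupp.single_apply]
    rw [Finset.sum_congr rfl fun e _ => step e, Finset.sum_eq_single f]
    · by_cases hv : t f = v
      · simp [hv, Finsupp.single_apply]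
      · have : v ≠ t f := fun hh => hv hh.symm
        simp [hv, Finsupp.single_apply, this]
    · intro a _ ha; simp [ha]
    · simp
  exact DFunLike.congr_fun hmap y

lemma phiL_apply (t h : E → V) (estar : E) (k : ℕ) (hreg : ∀ v : V, outdeg t v = k)
    {f : E} (hf : f ≠ estar) (x : E →₀ ℤ) :
    (phiMod (fun p : LineEdge t h => p.1.1) (fun p : LineEdge t h => p.1.2) estar x) f
      = (tau h estar x) (t f) - (k:ℤ) * x f := by
  have hmap : (Finsupp.lapply f).comp
        (phiMod (fun p : LineEdge t h => p.1.1) (fun p : LineEdge t h => p.1.2) estar)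
      = (Finsupp.lapply (t f)).comp (tau h estar) - (k:ℤ) • Finsupp.lapply f := by
    apply Finsupp.lhom_ext'
    intro e
    apply LinearMap.ext_ring
    simp only [LinearMap.coe_comp, Function.comp_apply, Finsupp.lsingle_apply,
      LinearMap.sub_apply, LinearMap.smul_apply, Finsupp.lapply_apply]
    by_cases he : e = estar
    · subst he
      rw [phiMod_single, if_pos rfl, tau_single, if_pos rfl]
      have h1 : (single e (1:ℤ)) f = 0 := by
        rw [Finsupp.single_apply, if_neg (fun hh => hf hh.symm)]
      simp [h1]
    · rw [phiL_single_ne t h estar k hreg he, tau_single, if_neg he, Finsupp.sub_apply,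
        Finsupp.smul_apply, sigma_apply]
  have := DFunLike.congr_fun hmap x
  simpa using this

lemma exists_edge (t : E → V) (estar : E) (k : ℕ) (hk : 1 < k)
    (hreg : ∀ v : V, outdeg t v = k) (v : V) : ∃ e : E, t e = v ∧ e ≠ estar := by
  by_contra hcon
  push_neg at hcon
  have hsub : (Finset.univ.filter fun e => t e = v) ⊆ {estar} := by
    intro e he
    simp only [Finset.mem_filter, Finset.mem_univ, true_and] at he
    simp [hcon e he]
  have hle := Finset.card_le_card hsub
  rw [Finset.card_singleton] at hle
  have h2 : outdeg t v = k := hreg v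
  rw [outdeg] at h2
  omega

lemma core (t h : E → V) (estar : E) (k : ℕ) (hk : 1 < k)
    (hreg : ∀ v : V, outdeg t v = k) (y : V →₀ ℤ)
    (hy : sigmaMap t y ∈ LinearMap.range
      (phiMod (fun p : LineEdge t h => p.1.1) (fun p : LineEdge t h => p.1.2) estar)) :
    y ∈ LinearMap.range (psi t h estar) := by
  obtain ⟨x, hx⟩ := hy
  choose c hc1 hc2 using exists_edge t estar k hk hreg
  have hcinj : Function.Injective c := fun a b hab => by rw [← hc1 a, hab, hc1 b]
  set z : V →₀ ℤ := Finsupp.comapDomain c x hcinj.injOn with hzdef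
  have hz : ∀ v, z v = x (c v) := fun v => rfl
  have htx : tau h estar x = y + (k:ℤ) • z := by
    ext v
    have h1 := phiL_apply t h estar k hreg (hc2 v) x
    rw [hx, sigma_apply, hc1 v] at h1
    rw [Finsupp.add_apply, Finsupp.smul_apply, hz v, h1, smul_eq_mul]
    ring
  have h2 := DFunLike.congr_fun (tau_phiL t h estar k hreg) x
  simp only [LinearMap.coe_comp, Function.comp_apply] at h2
  rw [hx] at h2
  have h3 := DFunLike.congr_fun (tau_sigma_lm t h estar k hreg) y
  simp only [LinearMap.coe_comp, Function.comp_apply, LinearMap.add_apply,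
    LinearMap.smul_apply, LinearMap.id_apply] at h3
  rw [h3, htx, map_add, map_smul] at h2
  have h4 : (k:ℤ) • y = (k:ℤ) • psi t h estar z := add_left_cancel h2
  refine ⟨z, ?_⟩
  ext v
  have h5 := DFunLike.congr_fun h4 v
  rw [Finsupp.smul_apply, Finsupp.smul_apply] at h5
  have hk0 : (k:ℤ) ≠ 0 := by exact_mod_cast (Nat.zero_lt_of_lt hk).ne'
  exact (mul_left_cancel₀ hk0 h5).symm

end Dev3

/-- for a `k`-out-regular graph with `k > 1`, the induced
homomorphism `σ̄ : cok ψ → K(𝓛G, e*)` is injective. -/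
theorem sigma_bar_injective
    {V E : Type*} [Fintype E] [DecidableEq V] [DecidableEq E]
    (t h : E → V) (estar : E) (k : ℕ) (hk : 1 < k)
    (hreg : ∀ v : V, outdeg t v = k) :
    ∀ σbar : ((V →₀ ℤ) ⧸ LinearMap.range (psi t h estar)) →ₗ[ℤ]
        ((E →₀ ℤ) ⧸ LinearMap.range
          (phiMod (fun p : LineEdge t h => p.1.1) (fun p : LineEdge t h => p.1.2) estar)),
      (∀ y : V →₀ ℤ,
        σbar (Submodule.Quotient.mk y) = Submodule.Quotient.mk (sigmaMap t y)) →
      Function.Injective σbar := by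
  intro σbar hσ a b hab
  obtain ⟨ya, rfl⟩ := Submodule.Quotient.mk_surjective _ a
  obtain ⟨yb, rfl⟩ := Submodule.Quotient.mk_surjective _ b
  rw [hσ, hσ, Submodule.Quotient.eq] at hab
  rw [Submodule.Quotient.eq]
  have hmem : sigmaMap t (ya - yb) ∈ LinearMap.range
      (phiMod (fun p : LineEdge t h => p.1.1) (fun p : LineEdge t h => p.1.2) estar) := by
    rw [map_sub]; exact hab
  exact core t h estar k hk hreg (ya - yb) hmem
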